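/- arXiv:1303.5237 — 4 statements merged into one kernel-verified Lean document; each statement's English description precedes it below -/
import Mathlib

section
/- For the block lower bidiagonal matrix g with identity diagonal blocks and subdiagonal blocks g_2,...,g_N (with g_1 := 0 and g_{N+1} := 0), every eigenvalue λ of gᵀg satisfies λ ≤ max_k { 1 + σ_max(g_{k+1})² + σ_max(g_k) + σ_max(g_{k+1}) }. -/
open Matrix

theorem Matrix.isHermitian_transpose_mul_self {m n α : Type*} [Fintype m] [CommSemiring α]
    [StarRing α] [TrivialStar α] (A : Matrix m n α) : (Aᵀ * A).IsHermitian := by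
  rw [IsHermitian, conjTranspose_eq_transpose_of_trivial, transpose_mul, transpose_transpose]

/-- Block diagonal matrix with `N` diagonal blocks of size `n`. -/
def blkDiag {N n : ℕ} (q : Fin N → Matrix (Fin n) (Fin n) ℝ) :
    Matrix (Fin N × Fin n) (Fin N × Fin n) ℝ :=
  fun p r => if p.1 = r.1 then q p.1 p.2 r.2 else 0

/-- Block lower bidiagonal matrix with identity diagonal blocks and subdiagonal
blocks; the block in position `(i, i-1)` (0-based) is `g (i+1)` (1-based paper index),
i.e. paper's `g_k` sits in (1-based) position `(k, k-1)` for `k = 2,…,N`. -/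
def lowerBidiag (N n : ℕ) (g : ℕ → Matrix (Fin n) (Fin n) ℝ) :
    Matrix (Fin N × Fin n) (Fin N × Fin n) ℝ :=
  fun p r =>
    if p.1 = r.1 then (if p.2 = r.2 then 1 else 0)
    else if (r.1 : ℕ) + 1 = (p.1 : ℕ) then g ((p.1 : ℕ) + 1) p.2 r.2
    else 0

/-- Minimum eigenvalue of a Hermitian real matrix. -/
noncomputable def lamMin {ι : Type*} [Fintype ι] [DecidableEq ι]
    (A : Matrix ι ι ℝ) (hA : A.IsHermitian) : ℝ := ⨅ i, hA.eigenvalues i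

/-- Maximum eigenvalue of a Hermitian real matrix. -/
noncomputable def lamMax {ι : Type*} [Fintype ι] [DecidableEq ι]
    (A : Matrix ι ι ℝ) (hA : A.IsHermitian) : ℝ := ⨆ i, hA.eigenvalues i

/-- Minimum singular value: square root of the minimum eigenvalue of `Aᴴ * A`. -/
noncomputable def sigMin {ι : Type*} [Fintype ι] [DecidableEq ι]
    (A : Matrix ι ι ℝ) : ℝ :=
  Real.sqrt (lamMin (Aᴴ * A) (isHermitian_transpose_mul_self A))

/-- Maximum singular value: square root of the maximum eigenvalue of `Aᴴ * A`. -/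
noncomputable def sigMax {ι : Type*} [Fintype ι] [DecidableEq ι]
    (A : Matrix ι ι ℝ) : ℝ :=
  Real.sqrt (lamMax (Aᴴ * A) (isHermitian_transpose_mul_self A))

set_option linter.unusedSectionVars false
set_option linter.unusedVariables false

section Helpers

variable {ι : Type*} [Fintype ι] [DecidableEq ι]

lemma dot_self_nonneg (v : ι → ℝ) : 0 ≤ v ⬝ᵥ v :=
  Finset.sum_nonneg fun i _ => mul_self_nonneg _

lemma dot_mulVec_real (M : Matrix ι ι ℝ) (x z : ι → ℝ) :
    x ⬝ᵥ (M *ᵥ z) = (Mᵀ *ᵥ x) ⬝ᵥ z := by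
  rw [dotProduct_mulVec, ← mulVec_transpose]

lemma real_star_matrix (M : Matrix ι ι ℝ) : star M = Mᵀ := by
  ext i j; simp [Matrix.star_eq_conjTranspose, Matrix.conjTranspose_apply]

lemma rayleigh_le (A : Matrix ι ι ℝ) (hA : A.IsHermitian) (x : ι → ℝ) :
    x ⬝ᵥ (A *ᵥ x) ≤ lamMax A hA * (x ⬝ᵥ x) := by
  set U : Matrix ι ι ℝ := (hA.eigenvectorUnitary : Matrix ι ι ℝ) with hU
  have hUU : U * star U = 1 := (Matrix.mem_unitaryGroup_iff).mp hA.eigenvectorUnitary.2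
  set y : ι → ℝ := star U *ᵥ x with hy
  have key : ∀ z : ι → ℝ, x ⬝ᵥ (U *ᵥ z) = y ⬝ᵥ z := by
    intro z
    rw [dot_mulVec_real, hy, real_star_matrix]
  have hUy : U *ᵥ y = x := by rw [hy, mulVec_mulVec, hUU, one_mulVec]
  have hxx : x ⬝ᵥ x = y ⬝ᵥ y := by
    have h := key y; rwa [hUy] at h
  have hAx : x ⬝ᵥ (A *ᵥ x) = ∑ i, hA.eigenvalues i * (y i * y i) := by
    conv_lhs => rw [hA.spectral_theorem, Unitary.conjStarAlgAut_apply]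
    rw [← mulVec_mulVec, ← mulVec_mulVec, key, ← hy]
    simp [dotProduct, mulVec_diagonal]
    exact Finset.sum_congr rfl fun i _ => by ring
  rw [hAx, hxx]
  have hrw : lamMax A hA * (y ⬝ᵥ y) = ∑ i, lamMax A hA * (y i * y i) := by
    rw [dotProduct, Finset.mul_sum]
  rw [hrw]
  refine Finset.sum_le_sum fun i _ => ?_
  exact mul_le_mul_of_nonneg_right
    (le_ciSup (Set.Finite.bddAbove (Set.finite_range _)) i) (mul_self_nonneg _)

lemma eig_le_of_quadform (A : Matrix ι ι ℝ) (hA : A.IsHermitian) (B : ℝ)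
    (hq : ∀ x : ι → ℝ, x ⬝ᵥ (A *ᵥ x) ≤ B * (x ⬝ᵥ x)) (i : ι) :
    hA.eigenvalues i ≤ B := by
  have hv := hA.eigenvalues_eq i
  set v : ι → ℝ := ⇑(hA.eigenvectorBasis i) with hvdef
  have hnorm : v ⬝ᵥ v = 1 := by
    have h1 : ‖hA.eigenvectorBasis i‖ = 1 := hA.eigenvectorBasis.orthonormal.1 i
    have h2 : (inner ℝ (hA.eigenvectorBasis i) (hA.eigenvectorBasis i) : ℝ) = v ⬝ᵥ v := by
      rw [PiLp.inner_apply]; simp only [hvdef, dotProduct]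
      exact Finset.sum_congr rfl fun _ _ => by simp [sq]
    rw [← h2, real_inner_self_eq_norm_sq, h1, one_pow]
  have hev : hA.eigenvalues i = v ⬝ᵥ (A *ᵥ v) := by
    simpa [dotProduct_comm] using hv
  rw [hev]
  calc v ⬝ᵥ (A *ᵥ v) ≤ B * (v ⬝ᵥ v) := hq v
  _ = B := by rw [hnorm, mul_one]

lemma lamMax_ATA_nonneg [Nonempty ι] (A : Matrix ι ι ℝ) :
    0 ≤ lamMax (Aᴴ * A) (isHermitian_transpose_mul_self A) :=
  le_trans (Matrix.eigenvalues_conjTranspose_mul_self_nonneg A (Classical.arbitrary ι))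
    (le_ciSup (Set.Finite.bddAbove (Set.finite_range _)) _)

lemma sigMax_sq [Nonempty ι] (A : Matrix ι ι ℝ) :
    sigMax A ^ 2 = lamMax (Aᴴ * A) (isHermitian_transpose_mul_self A) :=
  Real.sq_sqrt (lamMax_ATA_nonneg A)

lemma sigMax_nonneg (A : Matrix ι ι ℝ) : 0 ≤ sigMax A := Real.sqrt_nonneg _

lemma mulVec_dot_le [Nonempty ι] (A : Matrix ι ι ℝ) (v : ι → ℝ) :
    (A *ᵥ v) ⬝ᵥ (A *ᵥ v) ≤ sigMax A ^ 2 * (v ⬝ᵥ v) := by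
  rw [sigMax_sq]
  have hH : Aᴴ = Aᵀ := by ext i j; simp [conjTranspose_apply]
  have h : v ⬝ᵥ ((Aᴴ * A) *ᵥ v) = (A *ᵥ v) ⬝ᵥ (A *ᵥ v) := by
    rw [hH, ← mulVec_mulVec, dot_mulVec_real, transpose_transpose]
  rw [← h]
  exact rayleigh_le _ _ v

lemma dot_le_sqrt (u w : ι → ℝ) :
    u ⬝ᵥ w ≤ Real.sqrt (u ⬝ᵥ u) * Real.sqrt (w ⬝ᵥ w) := by
  refine (le_abs_self _).trans ?_
  rw [← Real.sqrt_mul (dot_self_nonneg u), ← Real.sqrt_sq_eq_abs]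
  apply Real.sqrt_le_sqrt
  calc (u ⬝ᵥ w)^2 ≤ (∑ i, u i ^2) * ∑ i, w i^2 := by
        simpa [dotProduct, sq] using Finset.sum_mul_sq_le_sq_mul_sq Finset.univ u w
  _ = (u ⬝ᵥ u) * (w ⬝ᵥ w) := by simp [dotProduct, sq]

lemma mulVec_nrm_le [Nonempty ι] (A : Matrix ι ι ℝ) (v : ι → ℝ) :
    Real.sqrt ((A *ᵥ v) ⬝ᵥ (A *ᵥ v)) ≤ sigMax A * Real.sqrt (v ⬝ᵥ v) := by
  calc Real.sqrt ((A *ᵥ v) ⬝ᵥ (A *ᵥ v)) ≤ Real.sqrt (sigMax A ^2 * (v ⬝ᵥ v)) :=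
        Real.sqrt_le_sqrt (mulVec_dot_le A v)
  _ = sigMax A * Real.sqrt (v ⬝ᵥ v) := by
        rw [Real.sqrt_mul (sq_nonneg _), Real.sqrt_sq (sigMax_nonneg A)]

lemma block_ineq [Nonempty ι] (A : Matrix ι ι ℝ) (u v : ι → ℝ) :
    (u + A *ᵥ v) ⬝ᵥ (u + A *ᵥ v) ≤
      (1 + sigMax A) * (u ⬝ᵥ u) + (sigMax A ^ 2 + sigMax A) * (v ⬝ᵥ v) := by
  set w := A *ᵥ v with hw
  have hexp : (u + w) ⬝ᵥ (u + w) = u ⬝ᵥ u + 2*(u ⬝ᵥ w) + w ⬝ᵥ w := by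
    rw [add_dotProduct, dotProduct_add, dotProduct_add, dotProduct_comm w u]; ring
  have h1 : u ⬝ᵥ w ≤ Real.sqrt (u ⬝ᵥ u) * (sigMax A * Real.sqrt (v ⬝ᵥ v)) :=
    (dot_le_sqrt u w).trans (mul_le_mul_of_nonneg_left (mulVec_nrm_le A v) (Real.sqrt_nonneg _))
  have h2 : w ⬝ᵥ w ≤ sigMax A^2 * (v ⬝ᵥ v) := mulVec_dot_le A v
  have hu2 : Real.sqrt (u ⬝ᵥ u)^2 = u ⬝ᵥ u := Real.sq_sqrt (dot_self_nonneg u)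
  have hv2 : Real.sqrt (v ⬝ᵥ v)^2 = v ⬝ᵥ v := Real.sq_sqrt (dot_self_nonneg v)
  have hs := sigMax_nonneg A
  nlinarith [mul_nonneg hs (sq_nonneg (Real.sqrt (u ⬝ᵥ u) - Real.sqrt (v ⬝ᵥ v)))]

lemma sigMax_zero [Nonempty ι] : sigMax (0 : Matrix ι ι ℝ) = 0 := by
  unfold sigMax lamMax
  have h : ∀ i, (isHermitian_transpose_mul_self (0:Matrix ι ι ℝ)).eigenvalues i = 0 := by
    intro i
    have := (isHermitian_transpose_mul_self (0:Matrix ι ι ℝ)).eigenvalues_eq i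
    simpa using this
  have h2 : (⨆ i, (isHermitian_transpose_mul_self (0:Matrix ι ι ℝ)).eigenvalues i) = (0:ℝ) := by
    simp only [h, ciSup_const]
  exact (congrArg Real.sqrt h2).trans Real.sqrt_zero

lemma shift_sum (N : ℕ) (hN : N ≠ 0) (c S : ℕ → ℝ) (hc1 : c 1 = 0) (hcN : c (N+1) = 0) :
    ∑ m ∈ Finset.range N, c (m+1) * S (m-1) = ∑ m ∈ Finset.range N, c (m+2) * S m := by
  obtain ⟨N', rfl⟩ := Nat.exists_eq_succ_of_ne_zero hN
  rw [Finset.sum_range_succ', Finset.sum_range_succ]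
  simp [hc1, hcN]

end Helpers

/-- Every eigenvalue `λ` of `gᵀg` satisfies
`λ ≤ max_{1 ≤ k ≤ N} { 1 + σ_max(g_{k+1})² + σ_max(g_k) + σ_max(g_{k+1}) }`,
with the conventions `g_1 = 0` and `g_{N+1} = 0`. -/
theorem stmt1 (N n : ℕ) [NeZero N] [NeZero n]
    (g : ℕ → Matrix (Fin n) (Fin n) ℝ)
    (hg1 : g 1 = 0) (hgN1 : g (N + 1) = 0)
    (G : Matrix (Fin N × Fin n) (Fin N × Fin n) ℝ) (hGdef : G = lowerBidiag N n g)
    (hne : (Finset.Icc 1 N).Nonempty) :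
    ∀ i, (isHermitian_transpose_mul_self G).eigenvalues i ≤
      (Finset.Icc 1 N).sup' hne
        (fun k => 1 + sigMax (g (k + 1)) ^ 2 + sigMax (g k) + sigMax (g (k + 1))) := by
  haveI : Nonempty (Fin n) := ⟨⟨0, Nat.pos_of_ne_zero (NeZero.ne n)⟩⟩
  set B := (Finset.Icc 1 N).sup' hne
      (fun k => 1 + sigMax (g (k + 1)) ^ 2 + sigMax (g k) + sigMax (g (k + 1))) with hB
  have hq : ∀ x : (Fin N × Fin n) → ℝ, x ⬝ᵥ ((Gᴴ * G) *ᵥ x) ≤ B * (x ⬝ᵥ x) := by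
    intro x
    set X : ℕ → Fin n → ℝ := fun m j => if h : m < N then x (⟨m, h⟩, j) else 0 with hX
    have hGH : Gᴴ = Gᵀ := by ext p r; simp [conjTranspose_apply]
    have hquad : x ⬝ᵥ ((Gᴴ * G) *ᵥ x) = (G *ᵥ x) ⬝ᵥ (G *ᵥ x) := by
      rw [hGH, ← mulVec_mulVec, dot_mulVec_real, transpose_transpose]
    have hGx : ∀ (k : Fin N) (j : Fin n),
        (G *ᵥ x) (k, j) = (X (k:ℕ) + g ((k:ℕ)+1) *ᵥ X ((k:ℕ)-1)) j := by
      intro k j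
      subst hGdef
      show ∑ r : Fin N × Fin n, lowerBidiag N n g (k,j) r * x r = _
      rw [Fintype.sum_prod_type]
      have hrow : ∀ k' : Fin N,
          (∑ j' : Fin n, lowerBidiag N n g (k,j) (k',j') * x (k',j'))
          = (if k = k' then x (k', j) else 0)
            + (if (k':ℕ)+1 = (k:ℕ) then ∑ j' : Fin n, g ((k:ℕ)+1) j j' * x (k', j') else 0) := by
        intro k'
        by_cases h1 : k = k'
        · have h2 : ¬ ((k':ℕ)+1 = (k:ℕ)) := by subst h1; omega
          subst h1
          simp [lowerBidiag, h2, ite_mul, Finset.sum_ite_eq]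
        · by_cases h2 : (k':ℕ)+1 = (k:ℕ)
          · simp [lowerBidiag, h1, h2]
          · simp [lowerBidiag, h1, h2]
      rw [Finset.sum_congr rfl (fun k' _ => hrow k'), Finset.sum_add_distrib]
      have hfirst : (∑ k' : Fin N, if k = k' then x (k', j) else 0) = x (k, j) := by
        simp [Finset.sum_ite_eq]
      have hsecond : (∑ k' : Fin N, if (k':ℕ)+1 = (k:ℕ) then
            ∑ j' : Fin n, g ((k:ℕ)+1) j j' * x (k', j') else 0)
          = (g ((k:ℕ)+1) *ᵥ X ((k:ℕ)-1)) j := by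
        rcases Nat.eq_zero_or_pos (k:ℕ) with hk0 | hkpos
        · rw [Finset.sum_eq_zero]
          · rw [hk0]; simp [hg1]
          · intro k' _
            rw [if_neg (by omega)]
        · have hlt : (k:ℕ) - 1 < N := by omega
          set k₀ : Fin N := ⟨(k:ℕ)-1, hlt⟩ with hk₀
          rw [Finset.sum_eq_single k₀]
          · rw [if_pos (by simp [hk₀]; omega)]
            simp only [mulVec, dotProduct]
            refine Finset.sum_congr rfl fun j' _ => ?_
            congr 1
            simp [hX, hlt, hk₀]
          · intro k' _ hk'
            rw [if_neg]
            intro hc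
            apply hk'
            apply Fin.ext
            simp [hk₀]; omega
          · intro h; exact absurd (Finset.mem_univ k₀) h
      rw [hfirst, hsecond]
      simp [hX, k.is_lt]
    have hsum1 : (G *ᵥ x) ⬝ᵥ (G *ᵥ x)
        = ∑ m ∈ Finset.range N,
            (X m + g (m+1) *ᵥ X (m-1)) ⬝ᵥ (X m + g (m+1) *ᵥ X (m-1)) := by
      rw [show (G *ᵥ x) ⬝ᵥ (G *ᵥ x) = ∑ p : Fin N × Fin n, (G *ᵥ x) p * (G *ᵥ x) p from rfl,
        Fintype.sum_prod_type, ← Fin.sum_univ_eq_sum_range]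
      refine Finset.sum_congr rfl fun k _ => ?_
      rw [show ∀ u w : Fin n → ℝ, u ⬝ᵥ w = ∑ j, u j * w j from fun _ _ => rfl]
      refine Finset.sum_congr rfl fun j _ => ?_
      rw [hGx k j]
    have hxsum : x ⬝ᵥ x = ∑ m ∈ Finset.range N, X m ⬝ᵥ X m := by
      rw [show x ⬝ᵥ x = ∑ p : Fin N × Fin n, x p * x p from rfl,
        Fintype.sum_prod_type, ← Fin.sum_univ_eq_sum_range]
      refine Finset.sum_congr rfl fun k _ => ?_
      rw [show ∀ u w : Fin n → ℝ, u ⬝ᵥ w = ∑ j, u j * w j from fun _ _ => rfl]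
      refine Finset.sum_congr rfl fun j _ => ?_
      simp [hX, k.is_lt]
    have hσ1 : sigMax (g 1) = 0 := by rw [hg1]; exact sigMax_zero
    have hσN : sigMax (g (N+1)) = 0 := by rw [hgN1]; exact sigMax_zero
    calc x ⬝ᵥ ((Gᴴ * G) *ᵥ x)
        = ∑ m ∈ Finset.range N,
            (X m + g (m+1) *ᵥ X (m-1)) ⬝ᵥ (X m + g (m+1) *ᵥ X (m-1)) := by
          rw [hquad, hsum1]
      _ ≤ ∑ m ∈ Finset.range N,
            ((1 + sigMax (g (m+1))) * (X m ⬝ᵥ X m)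
              + (sigMax (g (m+1))^2 + sigMax (g (m+1))) * (X (m-1) ⬝ᵥ X (m-1))) :=
          Finset.sum_le_sum fun m _ => block_ineq _ _ _
      _ = (∑ m ∈ Finset.range N, (1 + sigMax (g (m+1))) * (X m ⬝ᵥ X m))
            + ∑ m ∈ Finset.range N,
              (sigMax (g (m+1))^2 + sigMax (g (m+1))) * (X (m-1) ⬝ᵥ X (m-1)) :=
          Finset.sum_add_distrib
      _ = (∑ m ∈ Finset.range N, (1 + sigMax (g (m+1))) * (X m ⬝ᵥ X m))
            + ∑ m ∈ Finset.range N,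
              (sigMax (g (m+2))^2 + sigMax (g (m+2))) * (X m ⬝ᵥ X m) := by
          rw [shift_sum N (NeZero.ne N) (fun t => sigMax (g t)^2 + sigMax (g t))
            (fun m => X m ⬝ᵥ X m) (by simp [hσ1]) (by simp [hσN])]
      _ = ∑ m ∈ Finset.range N,
            (1 + sigMax (g (m+2))^2 + sigMax (g (m+1)) + sigMax (g (m+2))) * (X m ⬝ᵥ X m) := by
          rw [← Finset.sum_add_distrib]
          exact Finset.sum_congr rfl fun m _ => by ring
      _ ≤ ∑ m ∈ Finset.range N, B * (X m ⬝ᵥ X m) := by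
          refine Finset.sum_le_sum fun m hm => ?_
          refine mul_le_mul_of_nonneg_right ?_ (dot_self_nonneg _)
          have hmem : m + 1 ∈ Finset.Icc 1 N := by
            rw [Finset.mem_range] at hm
            rw [Finset.mem_Icc]; omega
          have h := Finset.le_sup'
            (fun k => 1 + sigMax (g (k + 1)) ^ 2 + sigMax (g k) + sigMax (g (k + 1))) hmem
          rw [hB]
          exact h
      _ = B * (x ⬝ᵥ x) := by rw [← Finset.mul_sum, hxsum]
  intro i
  exact eig_le_of_quadform _ _ B hq i
end

section
/- Let A be a symmetric positive definite block tridiagonal matrix with diagonal blocks b_1,...,b_N and subdiagonal blocks c_2,...,c_N, and suppose 0 < α_L ≤ λ_min(A) and λ_max(A) ≤ α_U. Define the forward recursion d_1 = b_1 and d_k = b_k − c_k d_{k−1}⁻¹ c_kᵀ for k = 2,...,N. Then every d_k is symmetric positive definite with α_L ≤ λ_min(d_k) ≤ λ_max(d_k) ≤ α_U. -/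
open Matrix

/-- Symmetric block tridiagonal matrix with `N` diagonal blocks `b 0, …, b (N-1)` of size
`n`, subdiagonal blocks `c i` in (0-based) position `(i, i-1)` for `i = 1,…,N-1`, and the
transposes `(c (i+1))ᵀ` in position `(i, i+1)`. -/
def blockTri (N n : ℕ) (b c : ℕ → Matrix (Fin n) (Fin n) ℝ) :
    Matrix (Fin N × Fin n) (Fin N × Fin n) ℝ :=
  fun p r =>
    if p.1 = r.1 then b (p.1 : ℕ) p.2 r.2
    else if (r.1 : ℕ) + 1 = (p.1 : ℕ) then c (p.1 : ℕ) p.2 r.2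
    else if (p.1 : ℕ) + 1 = (r.1 : ℕ) then c (r.1 : ℕ) r.2 p.2
    else 0

/-- Forward (Thomas) block elimination: `d 0 = b 0`,
`d (k+1) = b (k+1) − c (k+1) (d k)⁻¹ (c (k+1))ᵀ`. -/
noncomputable def fwdD {n : ℕ} (b c : ℕ → Matrix (Fin n) (Fin n) ℝ) :
    ℕ → Matrix (Fin n) (Fin n) ℝ
  | 0 => b 0
  | k + 1 => b (k + 1) - c (k + 1) * (fwdD b c k)⁻¹ * (c (k + 1))ᵀ

/-- Auxiliary backward elimination sequence: `bwdAux N b c j` is the backward Schur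
complement at block index `N - 1 - j`. -/
noncomputable def bwdAux {n : ℕ} (N : ℕ) (b c : ℕ → Matrix (Fin n) (Fin n) ℝ) :
    ℕ → Matrix (Fin n) (Fin n) ℝ
  | 0 => b (N - 1)
  | j + 1 => b (N - 1 - (j + 1)) - (c (N - 1 - j))ᵀ * (bwdAux N b c j)⁻¹ * c (N - 1 - j)

/-- Backward block elimination: `bwdD N b c (N-1) = b (N-1)` and
`bwdD N b c k = b k − (c (k+1))ᵀ (bwdD N b c (k+1))⁻¹ (c (k+1))` for `k < N-1`. -/
noncomputable def bwdD {n : ℕ} (N : ℕ) (b c : ℕ → Matrix (Fin n) (Fin n) ℝ) (k : ℕ) :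
    Matrix (Fin n) (Fin n) ℝ :=
  bwdAux N b c (N - 1 - k)

/-- Forward elimination of the right-hand side: `s 0 = r 0`,
`s (k+1) = r (k+1) − c (k+1) (d k)⁻¹ s k`. -/
noncomputable def fwdS {n : ℕ} (b c : ℕ → Matrix (Fin n) (Fin n) ℝ)
    (r : ℕ → Fin n → ℝ) : ℕ → Fin n → ℝ
  | 0 => r 0
  | k + 1 => r (k + 1) - (c (k + 1) * (fwdD b c k)⁻¹) *ᵥ (fwdS b c r k)

/-- Auxiliary backward elimination of the right-hand side. -/
noncomputable def bwdSAux {n : ℕ} (N : ℕ) (b c : ℕ → Matrix (Fin n) (Fin n) ℝ)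
    (r : ℕ → Fin n → ℝ) : ℕ → Fin n → ℝ
  | 0 => r (N - 1)
  | j + 1 => r (N - 1 - (j + 1)) -
      ((c (N - 1 - j))ᵀ * (bwdAux N b c j)⁻¹) *ᵥ (bwdSAux N b c r j)

/-- Backward elimination of the right-hand side:
`bwdS N b c r k = r k − (c (k+1))ᵀ (bwdD N b c (k+1))⁻¹ (bwdS N b c r (k+1))`. -/
noncomputable def bwdS {n : ℕ} (N : ℕ) (b c : ℕ → Matrix (Fin n) (Fin n) ℝ)
    (r : ℕ → Fin n → ℝ) (k : ℕ) : Fin n → ℝ :=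
  bwdSAux N b c r (N - 1 - k)
section spectral
variable {m : Type*} [Fintype m] [DecidableEq m] {M : Matrix m m ℝ}

omit [DecidableEq m] in
lemma dot_mulVec_aux (U : Matrix m m ℝ) (x w : m → ℝ) :
    x ⬝ᵥ (U *ᵥ w) = (Uᵀ *ᵥ x) ⬝ᵥ w := by
  rw [Matrix.dotProduct_mulVec, Matrix.mulVec_transpose]

lemma quad_decomp (hM : M.IsHermitian) (x : m → ℝ) :
    x ⬝ᵥ (M *ᵥ x) =
      ∑ i, hM.eigenvalues i * ((star (hM.eigenvectorUnitary : Matrix m m ℝ) *ᵥ x) i)^2 := by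
  set U : Matrix m m ℝ := (hM.eigenvectorUnitary : Matrix m m ℝ) with hU
  have hsp : M = U * Matrix.diagonal hM.eigenvalues * star U := by
    simpa using hM.spectral_theorem
  have hstar : star U = Uᵀ := by
    simp [star, Matrix.conjTranspose]
  conv_lhs => rw [hsp]
  rw [← Matrix.mulVec_mulVec, ← Matrix.mulVec_mulVec, dot_mulVec_aux, ← hstar]
  simp [dotProduct, Matrix.mulVec_diagonal, sq]
  ring_nf
  exact Finset.sum_congr rfl fun i _ => by ring

lemma normsq_decomp (hM : M.IsHermitian) (x : m → ℝ) :
    x ⬝ᵥ x = ∑ i, ((star (hM.eigenvectorUnitary : Matrix m m ℝ) *ᵥ x) i)^2 := by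
  set U : Matrix m m ℝ := (hM.eigenvectorUnitary : Matrix m m ℝ) with hU
  have h1 : U * star U = 1 := (Matrix.mem_unitaryGroup_iff).mp hM.eigenvectorUnitary.2
  have hstar : star U = Uᵀ := by simp [star, Matrix.conjTranspose]
  have : x ⬝ᵥ x = x ⬝ᵥ ((U * star U) *ᵥ x) := by rw [h1, Matrix.one_mulVec]
  rw [this, ← Matrix.mulVec_mulVec, dot_mulVec_aux, ← hstar]
  simp [dotProduct, sq]

lemma form_le_of_eigen_le (hM : M.IsHermitian) {β : ℝ}
    (h : ∀ i, hM.eigenvalues i ≤ β) (x : m → ℝ) :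
    x ⬝ᵥ (M *ᵥ x) ≤ β * (x ⬝ᵥ x) := by
  rw [quad_decomp hM x, normsq_decomp hM x, Finset.mul_sum]
  exact Finset.sum_le_sum fun i _ => mul_le_mul_of_nonneg_right (h i) (sq_nonneg _)

lemma le_form_of_le_eigen (hM : M.IsHermitian) {α : ℝ}
    (h : ∀ i, α ≤ hM.eigenvalues i) (x : m → ℝ) :
    α * (x ⬝ᵥ x) ≤ x ⬝ᵥ (M *ᵥ x) := by
  rw [quad_decomp hM x, normsq_decomp hM x, Finset.mul_sum]
  exact Finset.sum_le_sum fun i _ => mul_le_mul_of_nonneg_right (h i) (sq_nonneg _)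

lemma eigen_mem_of_form (hM : M.IsHermitian) {α β : ℝ}
    (hl : ∀ x, α * (x ⬝ᵥ x) ≤ x ⬝ᵥ (M *ᵥ x)) (hu : ∀ x, x ⬝ᵥ (M *ᵥ x) ≤ β * (x ⬝ᵥ x))
    (i : m) : α ≤ hM.eigenvalues i ∧ hM.eigenvalues i ≤ β := by
  set v : m → ℝ := ⇑(hM.eigenvectorBasis i) with hv
  have hmv : M *ᵥ v = hM.eigenvalues i • v := hM.mulVec_eigenvectorBasis i
  have hvv : v ⬝ᵥ v = 1 := by
    have h1 : (inner ℝ (hM.eigenvectorBasis i) (hM.eigenvectorBasis i) : ℝ) = 1 := by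
      rw [real_inner_self_eq_norm_sq, hM.eigenvectorBasis.orthonormal.1 i]; norm_num
    rw [← h1, PiLp.inner_apply]
    simp [dotProduct, hv, sq]
  have hq : v ⬝ᵥ (M *ᵥ v) = hM.eigenvalues i := by
    rw [hmv, dotProduct_smul, smul_eq_mul, hvv, mul_one]
  constructor
  · have := hl v; rw [hq, hvv, mul_one] at this; exact this
  · have := hu v; rw [hq, hvv, mul_one] at this; exact this

omit [DecidableEq m] in
lemma isHermitian_of_transpose_eq (h : Mᵀ = M) : M.IsHermitian := by
  show Mᴴ = M
  ext i j
  rw [Matrix.conjTranspose_apply, star_trivial]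
  exact congrFun (congrFun h i) j

omit [DecidableEq m] in
lemma transpose_eq_of_isHermitian (h : M.IsHermitian) : Mᵀ = M := by
  ext i j
  rw [Matrix.transpose_apply, ← h.apply i j, star_trivial]

omit [DecidableEq m] in
lemma quad_add (hs : Mᵀ = M) (u v : m → ℝ) :
    (u + v) ⬝ᵥ (M *ᵥ (u + v))
      = u ⬝ᵥ (M *ᵥ u) + 2 * (v ⬝ᵥ (M *ᵥ u)) + v ⬝ᵥ (M *ᵥ v) := by
  have comm : u ⬝ᵥ (M *ᵥ v) = v ⬝ᵥ (M *ᵥ u) := by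
    rw [dot_mulVec_aux, hs, dotProduct_comm]
  rw [Matrix.mulVec_add, dotProduct_add, add_dotProduct,
    add_dotProduct, comm]
  ring
end spectral

section blocks
variable {N n : ℕ} (b c : ℕ → Matrix (Fin n) (Fin n) ℝ)

lemma blockTri_diag (K : Fin N) (i j : Fin n) :
    blockTri N n b c (K, i) (K, j) = b (K : ℕ) i j := by simp [blockTri]

lemma blockTri_sub {K L : Fin N} (h : (L : ℕ) + 1 = (K : ℕ)) (i j : Fin n) :
    blockTri N n b c (K, i) (L, j) = c (K : ℕ) i j := by
  have hne : K ≠ L := by intro he; rw [he] at h; omega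
  simp [blockTri, hne, h]

lemma blockTri_zero {K L : Fin N} (h1 : K ≠ L) (h2 : (L : ℕ) + 1 ≠ (K : ℕ))
    (h3 : (K : ℕ) + 1 ≠ (L : ℕ)) (i j : Fin n) :
    blockTri N n b c (K, i) (L, j) = 0 := by
  simp [blockTri, h1, h2, h3]

lemma dot_single (K : Fin N) (y : Fin n → ℝ) (w : Fin N × Fin n → ℝ) :
    (fun p : Fin N × Fin n => if p.1 = K then y p.2 else 0) ⬝ᵥ w
      = ∑ i, y i * w (K, i) := by
  rw [dotProduct, Fintype.sum_prod_type]
  rw [Finset.sum_eq_single K]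
  · simp
  · intro L _ hL; simp [hL]
  · simp

lemma mulVec_at_top {k : ℕ} (hk : k + 1 < N) (u : Fin N × Fin n → ℝ)
    (hu : ∀ p : Fin N × Fin n, k < (p.1 : ℕ) → u p = 0) (i : Fin n) :
    (blockTri N n b c *ᵥ u) (⟨k + 1, hk⟩, i)
      = ∑ j, c (k + 1) i j * u (⟨k, Nat.lt_of_succ_lt hk⟩, j) := by
  rw [Matrix.mulVec, dotProduct, Fintype.sum_prod_type]
  rw [Finset.sum_eq_single (⟨k, Nat.lt_of_succ_lt hk⟩ : Fin N)]
  · apply Finset.sum_congr rfl; intro j _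
    rw [blockTri_sub]; rfl
  · intro L _ hL
    by_cases hgt : k < (L : ℕ)
    · apply Finset.sum_eq_zero; intro j _; rw [hu (L, j) hgt, mul_zero]
    · apply Finset.sum_eq_zero; intro j _
      have hLk : (L : ℕ) < k := by
        rcases Nat.lt_or_ge (L : ℕ) k with h | h
        · exact h
        · exfalso; exact hL (Fin.ext (by simp only [Fin.val_mk]; omega))
      rw [blockTri_zero]
      · ring
      · intro he; have := congrArg (Fin.val) he; simp at this; omega
      · simp; omega
      · simp; omega
  · simp

lemma mulVec_single_block (K : Fin N) (y : Fin n → ℝ) (i : Fin n) :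
    (blockTri N n b c *ᵥ fun p : Fin N × Fin n => if p.1 = K then y p.2 else 0) (K, i)
      = ∑ j, b (K : ℕ) i j * y j := by
  rw [Matrix.mulVec, dotProduct, Fintype.sum_prod_type]
  rw [Finset.sum_eq_single K]
  · apply Finset.sum_congr rfl; intro j _; rw [blockTri_diag]; simp
  · intro L _ hL; apply Finset.sum_eq_zero; intro j _; simp [hL]
  · simp

lemma quad_single (K : Fin N) (y : Fin n → ℝ) :
    (fun p : Fin N × Fin n => if p.1 = K then y p.2 else 0) ⬝ᵥ
      (blockTri N n b c *ᵥ fun p : Fin N × Fin n => if p.1 = K then y p.2 else 0)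
      = y ⬝ᵥ (b (K : ℕ) *ᵥ y) := by
  rw [dot_single]
  simp only [mulVec_single_block]
  rw [dotProduct]
  apply Finset.sum_congr rfl; intro i _
  rw [Matrix.mulVec, dotProduct]

lemma dot_single_self (K : Fin N) (y : Fin n → ℝ) :
    (fun p : Fin N × Fin n => if p.1 = K then y p.2 else 0) ⬝ᵥ
      (fun p : Fin N × Fin n => if p.1 = K then y p.2 else 0) = y ⬝ᵥ y := by
  rw [dot_single]; simp [dotProduct]

lemma b_symm (hsA : (blockTri N n b c)ᵀ = blockTri N n b c) {k : ℕ} (hk : k < N) :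
    (b k)ᵀ = b k := by
  ext i j
  have h := congrFun (congrFun hsA ((⟨k, hk⟩ : Fin N), i)) ((⟨k, hk⟩ : Fin N), j)
  rw [Matrix.transpose_apply] at h
  rw [blockTri_diag, blockTri_diag] at h
  simpa using h
end blocks

noncomputable def elimAux {n : ℕ} (b c : ℕ → Matrix (Fin n) (Fin n) ℝ)
    (k : ℕ) (y : Fin n → ℝ) : ℕ → Fin n → ℝ
  | 0 => y
  | m + 1 => -((fwdD b c (k - 1 - m))⁻¹ *ᵥ ((c (k - m))ᵀ *ᵥ elimAux b c k y m))

noncomputable def Zvec {n : ℕ} (N : ℕ) (b c : ℕ → Matrix (Fin n) (Fin n) ℝ)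
    (k : ℕ) (y : Fin n → ℝ) : Fin N × Fin n → ℝ :=
  fun p => if (p.1 : ℕ) ≤ k then elimAux b c k y (k - (p.1 : ℕ)) p.2 else 0

section elim
variable {N n : ℕ} (b c : ℕ → Matrix (Fin n) (Fin n) ℝ)

lemma elimAux_succ (k m : ℕ) (y : Fin n → ℝ) :
    elimAux b c (k + 1) y (m + 1)
      = elimAux b c k (-((fwdD b c k)⁻¹ *ᵥ ((c (k + 1))ᵀ *ᵥ y))) m := by
  induction m with
  | zero => simp [elimAux]
  | succ m ih =>
      have e1 : k + 1 - 1 - (m + 1) = k - 1 - m := by omega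
      have e2 : k + 1 - (m + 1) = k - m := by omega
      show -((fwdD b c (k + 1 - 1 - (m + 1)))⁻¹ *ᵥ
          ((c (k + 1 - (m + 1)))ᵀ *ᵥ elimAux b c (k + 1) y (m + 1))) = _
      rw [e1, e2, ih]
      rfl

lemma Zvec_succ {k : ℕ} (hk : k + 1 < N) (y : Fin n → ℝ) :
    Zvec N b c (k + 1) y
      = Zvec N b c k (-((fwdD b c k)⁻¹ *ᵥ ((c (k + 1))ᵀ *ᵥ y)))
        + fun p : Fin N × Fin n => if p.1 = (⟨k + 1, hk⟩ : Fin N) then y p.2 else 0 := by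
  funext p
  simp only [Zvec, Pi.add_apply]
  rcases Nat.lt_trichotomy (p.1 : ℕ) (k + 1) with h | h | h
  · have h1 : (p.1 : ℕ) ≤ k + 1 := by omega
    have h2 : (p.1 : ℕ) ≤ k := by omega
    have h3 : p.1 ≠ (⟨k + 1, hk⟩ : Fin N) := by
      intro he; have := congrArg Fin.val he; simp at this; omega
    have e : k + 1 - (p.1 : ℕ) = (k - (p.1 : ℕ)) + 1 := by omega
    rw [if_pos h1, if_pos h2, if_neg h3, e, elimAux_succ, add_zero]
  · have h1 : (p.1 : ℕ) ≤ k + 1 := by omega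
    have h2 : ¬ (p.1 : ℕ) ≤ k := by omega
    have h3 : p.1 = (⟨k + 1, hk⟩ : Fin N) := by
      apply Fin.ext; simpa using h
    rw [if_pos h1, if_neg h2, if_pos h3, h, Nat.sub_self]
    show y p.2 = 0 + y p.2
    rw [zero_add]
  · have h1 : ¬ (p.1 : ℕ) ≤ k + 1 := by omega
    have h2 : ¬ (p.1 : ℕ) ≤ k := by omega
    have h3 : p.1 ≠ (⟨k + 1, hk⟩ : Fin N) := by
      intro he; have := congrArg Fin.val he; simp at this; omega
    rw [if_neg h1, if_neg h2, if_neg h3, add_zero]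

lemma Zvec_supp (k : ℕ) (y : Fin n → ℝ) (p : Fin N × Fin n) (hp : k < (p.1 : ℕ)) :
    Zvec N b c k y p = 0 := by
  simp only [Zvec]; rw [if_neg (by omega)]

lemma Zvec_top {k : ℕ} (hk : k < N) (y : Fin n → ℝ) (i : Fin n) :
    Zvec N b c k y (⟨k, hk⟩, i) = y i := by
  simp only [Zvec]
  rw [if_pos (by simp)]; norm_num
  rfl

lemma Zvec_norm {k : ℕ} (hk : k < N) (y : Fin n → ℝ) :
    y ⬝ᵥ y ≤ Zvec N b c k y ⬝ᵥ Zvec N b c k y := by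
  have h1 : Zvec N b c k y ⬝ᵥ Zvec N b c k y
      = ∑ L : Fin N, ∑ i, Zvec N b c k y (L, i) * Zvec N b c k y (L, i) := by
    rw [dotProduct, Fintype.sum_prod_type]
  rw [h1]
  have h2 : y ⬝ᵥ y = ∑ i, Zvec N b c k y ((⟨k, hk⟩ : Fin N), i)
      * Zvec N b c k y ((⟨k, hk⟩ : Fin N), i) := by
    rw [dotProduct]
    apply Finset.sum_congr rfl; intro i _
    rw [Zvec_top]
  rw [h2]
  exact Finset.single_le_sum
    (f := fun L => ∑ i, Zvec N b c k y (L, i) * Zvec N b c k y (L, i))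
    (fun L _ => Finset.sum_nonneg fun i _ => mul_self_nonneg _) (Finset.mem_univ _)

lemma Zvec_zero (y : Fin n → ℝ) :
    Zvec N b c 0 y = fun p : Fin N × Fin n => if (p.1 : ℕ) = 0 then y p.2 else 0 := by
  funext p
  simp only [Zvec]
  by_cases h : (p.1 : ℕ) = 0
  · rw [if_pos (by omega), if_pos h, h]; rfl
  · rw [if_neg (by omega), if_neg h]
end elim

section main
variable {N n : ℕ} {αL αU : ℝ}

lemma pd_of_lower {M : Matrix (Fin n) (Fin n) ℝ} (hs : Mᵀ = M) (hαL : 0 < αL)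
    (hlow : ∀ y, αL * (y ⬝ᵥ y) ≤ y ⬝ᵥ (M *ᵥ y)) : M.PosDef := by
  refine Matrix.PosDef.of_dotProduct_mulVec_pos (isHermitian_of_transpose_eq hs) fun x hx => ?_
  have hstar : star x = x := by funext i; exact star_trivial _
  rw [hstar]
  have hxx : (0 : ℝ) < x ⬝ᵥ x := by
    have h0 : (0 : ℝ) ≤ x ⬝ᵥ x := Finset.sum_nonneg fun i _ => mul_self_nonneg _
    rcases lt_or_eq_of_le h0 with h | h
    · exact h
    · exact absurd (dotProduct_self_eq_zero.mp h.symm) hx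
  calc (0 : ℝ) < αL * (x ⬝ᵥ x) := by positivity
    _ ≤ x ⬝ᵥ (M *ᵥ x) := hlow x

lemma main_ind (b c : ℕ → Matrix (Fin n) (Fin n) ℝ)
    (hherm : (blockTri N n b c).IsHermitian)
    (hl : ∀ z, αL * (z ⬝ᵥ z) ≤ z ⬝ᵥ (blockTri N n b c *ᵥ z))
    (hu : ∀ z, z ⬝ᵥ (blockTri N n b c *ᵥ z) ≤ αU * (z ⬝ᵥ z))
    (hαL : 0 < αL) :
    ∀ k, k < N → (fwdD b c k).PosDef ∧
      (∀ y, αL * (y ⬝ᵥ y) ≤ y ⬝ᵥ (fwdD b c k *ᵥ y)) ∧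
      (∀ y, y ⬝ᵥ (fwdD b c k *ᵥ y) ≤ αU * (y ⬝ᵥ y)) := by
  have hsA : (blockTri N n b c)ᵀ = blockTri N n b c := transpose_eq_of_isHermitian hherm
  have hbup : ∀ (K : Fin N) (y : Fin n → ℝ), y ⬝ᵥ (b (K : ℕ) *ᵥ y) ≤ αU * (y ⬝ᵥ y) := by
    intro K y
    have := hu (fun p : Fin N × Fin n => if p.1 = K then y p.2 else 0)
    rwa [quad_single, dot_single_self] at this
  have hlowgen : ∀ k, k < N →
      (∀ y, Zvec N b c k y ⬝ᵥ (blockTri N n b c *ᵥ Zvec N b c k y)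
          = y ⬝ᵥ (fwdD b c k *ᵥ y)) →
      ∀ y, αL * (y ⬝ᵥ y) ≤ y ⬝ᵥ (fwdD b c k *ᵥ y) := by
    intro k hk hid y
    calc αL * (y ⬝ᵥ y) ≤ αL * (Zvec N b c k y ⬝ᵥ Zvec N b c k y) :=
          mul_le_mul_of_nonneg_left (Zvec_norm b c hk y) hαL.le
      _ ≤ Zvec N b c k y ⬝ᵥ (blockTri N n b c *ᵥ Zvec N b c k y) := hl _
      _ = y ⬝ᵥ (fwdD b c k *ᵥ y) := hid y
  have core : ∀ k, k < N → (fwdD b c k).PosDef ∧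
      (∀ y, Zvec N b c k y ⬝ᵥ (blockTri N n b c *ᵥ Zvec N b c k y)
          = y ⬝ᵥ (fwdD b c k *ᵥ y)) ∧
      (∀ y, y ⬝ᵥ (fwdD b c k *ᵥ y) ≤ αU * (y ⬝ᵥ y)) := by
    intro k
    induction k with
    | zero =>
        intro hk
        have hb0 : (b 0)ᵀ = b 0 := b_symm b c hsA hk
        have hid : ∀ y, Zvec N b c 0 y ⬝ᵥ (blockTri N n b c *ᵥ Zvec N b c 0 y)
            = y ⬝ᵥ (fwdD b c 0 *ᵥ y) := by
          intro y
          have he : Zvec N b c 0 y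
              = fun p : Fin N × Fin n => if p.1 = (⟨0, hk⟩ : Fin N) then y p.2 else 0 := by
            rw [Zvec_zero]
            funext p
            congr 1
            simp [Fin.ext_iff]
          rw [he, quad_single]
          rfl
        refine ⟨pd_of_lower hb0 hαL (hlowgen 0 hk hid), hid, ?_⟩
        intro y
        have := hbup (⟨0, hk⟩ : Fin N) y
        simpa [fwdD] using this
    | succ k ih =>
        intro hk
        have hk' : k < N := Nat.lt_of_succ_lt hk
        obtain ⟨hpdk, hidk, hupk⟩ := ih hk'
        have hdinv : (fwdD b c k)⁻¹.PosDef := hpdk.inv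
        have hct : (c (k + 1))ᴴ = (c (k + 1))ᵀ := by
          ext i j; rw [Matrix.conjTranspose_apply, Matrix.transpose_apply, star_trivial]
        have hM2psd : (c (k + 1) * (fwdD b c k)⁻¹ * (c (k + 1))ᵀ).PosSemidef := by
          rw [← hct]
          exact hdinv.posSemidef.mul_mul_conjTranspose_same (c (k + 1))
        have hM2nonneg : ∀ y : Fin n → ℝ,
            0 ≤ y ⬝ᵥ ((c (k + 1) * (fwdD b c k)⁻¹ * (c (k + 1))ᵀ) *ᵥ y) := by
          intro y
          have h0 := hM2psd.dotProduct_mulVec_nonneg y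
          have hstar : star y = y := by funext i; exact star_trivial _
          rw [hstar] at h0
          simpa using h0
        have hbsym : (b (k + 1))ᵀ = b (k + 1) := b_symm b c hsA hk
        have hfw : fwdD b c (k + 1)
            = b (k + 1) - c (k + 1) * (fwdD b c k)⁻¹ * (c (k + 1))ᵀ := rfl
        have hsymd : (fwdD b c (k + 1))ᵀ = fwdD b c (k + 1) := by
          rw [hfw, Matrix.transpose_sub, hbsym, transpose_eq_of_isHermitian hM2psd.1]
        have hdet : IsUnit (fwdD b c k).det := (ne_of_gt hpdk.det_pos).isUnit
        have hinv : fwdD b c k * (fwdD b c k)⁻¹ = 1 := Matrix.mul_nonsing_inv _ hdet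
        -- the elimination identity at k+1
        have hid : ∀ y, Zvec N b c (k + 1) y ⬝ᵥ (blockTri N n b c *ᵥ Zvec N b c (k + 1) y)
            = y ⬝ᵥ (fwdD b c (k + 1) *ᵥ y) := by
          intro y
          have hzs := Zvec_succ b c hk y
          rw [hzs, quad_add hsA]
          have ht2 : (fun p : Fin N × Fin n =>
                if p.1 = (⟨k + 1, hk⟩ : Fin N) then y p.2 else 0) ⬝ᵥ
              (blockTri N n b c *ᵥ
                Zvec N b c k (-((fwdD b c k)⁻¹ *ᵥ ((c (k + 1))ᵀ *ᵥ y))))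
              = y ⬝ᵥ (c (k + 1) *ᵥ (-((fwdD b c k)⁻¹ *ᵥ ((c (k + 1))ᵀ *ᵥ y)))) := by
            rw [dot_single, dotProduct]
            apply Finset.sum_congr rfl; intro i _
            congr 1
            rw [mulVec_at_top b c hk _ (fun p hp => Zvec_supp b c k _ p hp) i]
            rw [Matrix.mulVec, dotProduct]
            apply Finset.sum_congr rfl; intro j _
            rw [Zvec_top]
          rw [hidk, ht2, quad_single]
          have h1 : (-((fwdD b c k)⁻¹ *ᵥ ((c (k + 1))ᵀ *ᵥ y))) ⬝ᵥ
                (fwdD b c k *ᵥ (-((fwdD b c k)⁻¹ *ᵥ ((c (k + 1))ᵀ *ᵥ y))))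
              = ((c (k + 1))ᵀ *ᵥ y) ⬝ᵥ ((fwdD b c k)⁻¹ *ᵥ ((c (k + 1))ᵀ *ᵥ y)) := by
            have key : fwdD b c k *ᵥ ((fwdD b c k)⁻¹ *ᵥ ((c (k + 1))ᵀ *ᵥ y))
                = (c (k + 1))ᵀ *ᵥ y := by
              calc fwdD b c k *ᵥ ((fwdD b c k)⁻¹ *ᵥ ((c (k + 1))ᵀ *ᵥ y))
                  = (fwdD b c k * (fwdD b c k)⁻¹) *ᵥ ((c (k + 1))ᵀ *ᵥ y) :=
                    Matrix.mulVec_mulVec _ _ _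
                _ = (c (k + 1))ᵀ *ᵥ y := by rw [hinv, Matrix.one_mulVec]
            rw [Matrix.mulVec_neg, key, dotProduct_neg, neg_dotProduct, neg_neg]
            exact dotProduct_comm _ _
          have h2 : y ⬝ᵥ (c (k + 1) *ᵥ (-((fwdD b c k)⁻¹ *ᵥ ((c (k + 1))ᵀ *ᵥ y))))
              = -(((c (k + 1))ᵀ *ᵥ y) ⬝ᵥ ((fwdD b c k)⁻¹ *ᵥ ((c (k + 1))ᵀ *ᵥ y))) := by
            rw [dot_mulVec_aux, dotProduct_neg]
          have hrhs : y ⬝ᵥ (fwdD b c (k + 1) *ᵥ y)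
              = y ⬝ᵥ (b (k + 1) *ᵥ y)
                - ((c (k + 1))ᵀ *ᵥ y) ⬝ᵥ ((fwdD b c k)⁻¹ *ᵥ ((c (k + 1))ᵀ *ᵥ y)) := by
            rw [hfw, Matrix.sub_mulVec, dotProduct_sub]
            congr 1
            rw [← Matrix.mulVec_mulVec, ← Matrix.mulVec_mulVec, dot_mulVec_aux]
          rw [h1, h2, hrhs]
          have hval : ((⟨k + 1, hk⟩ : Fin N) : ℕ) = k + 1 := rfl
          rw [hval]
          ring
        refine ⟨pd_of_lower hsymd hαL (hlowgen (k + 1) hk hid), hid, ?_⟩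
        intro y
        have hb1 := hbup (⟨k + 1, hk⟩ : Fin N) y
        rw [show (((⟨k + 1, hk⟩ : Fin N)) : ℕ) = k + 1 from rfl] at hb1
        calc y ⬝ᵥ (fwdD b c (k + 1) *ᵥ y)
            = y ⬝ᵥ (b (k + 1) *ᵥ y)
              - y ⬝ᵥ ((c (k + 1) * (fwdD b c k)⁻¹ * (c (k + 1))ᵀ) *ᵥ y) := by
              rw [hfw, Matrix.sub_mulVec, dotProduct_sub]
          _ ≤ y ⬝ᵥ (b (k + 1) *ᵥ y) := sub_le_self _ (hM2nonneg y)
          _ ≤ αU * (y ⬝ᵥ y) := hb1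
  intro k hk
  obtain ⟨hpd, hid, hup⟩ := core k hk
  exact ⟨hpd, hlowgen k hk hid, hup⟩
end main

/-- If the symmetric positive definite block tridiagonal matrix `A` has all
eigenvalues in `[αL, αU]` with `0 < αL`, then every forward Schur complement `d_k` produced
by the Thomas recursion is symmetric positive definite with all eigenvalues in `[αL, αU]`. -/
theorem stmt4 (N n : ℕ) [NeZero N] [NeZero n]
    (b c : ℕ → Matrix (Fin n) (Fin n) ℝ)
    (A : Matrix (Fin N × Fin n) (Fin N × Fin n) ℝ) (hAdef : A = blockTri N n b c)
    (hA : A.PosDef)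
    (αL αU : ℝ) (hαL : 0 < αL)
    (hbd : ∀ i, αL ≤ hA.1.eigenvalues i ∧ hA.1.eigenvalues i ≤ αU) :
    ∀ k < N, ∃ h : (fwdD b c k).PosDef,
      ∀ i, αL ≤ h.1.eigenvalues i ∧ h.1.eigenvalues i ≤ αU := by
  subst hAdef
  have hl : ∀ z : Fin N × Fin n → ℝ,
      αL * (z ⬝ᵥ z) ≤ z ⬝ᵥ (blockTri N n b c *ᵥ z) :=
    le_form_of_le_eigen hA.1 (fun i => (hbd i).1)
  have hu : ∀ z : Fin N × Fin n → ℝ,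
      z ⬝ᵥ (blockTri N n b c *ᵥ z) ≤ αU * (z ⬝ᵥ z) :=
    form_le_of_eigen_le hA.1 (fun i => (hbd i).2)
  intro k hk
  obtain ⟨hpd, hlow, hup⟩ := main_ind b c hA.1 hl hu hαL k hk
  exact ⟨hpd, fun i => eigen_mem_of_form hpd.1 hlow hup i⟩
end

section
/- Let A be a symmetric positive definite block tridiagonal matrix with diagonal blocks b_1,...,b_N and subdiagonal blocks c_2,...,c_N, with 0 < α_L ≤ λ_min(A) and λ_max(A) ≤ α_U. Define the backward recursion d_N = b_N and d_k = b_k − c_{k+1}ᵀ d_{k+1}⁻¹ c_{k+1} for k = N−1,...,1. Then every d_k is symmetric positive definite with α_L ≤ λ_min(d_k) ≤ λ_max(d_k) ≤ α_U. -/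
open Matrix

theorem bwdD_last {n : ℕ} (N : ℕ) (b c : ℕ → Matrix (Fin n) (Fin n) ℝ) :
    bwdD N b c (N - 1) = b (N - 1) := by
  unfold bwdD
  rw [Nat.sub_self]
  rfl

theorem bwdD_step {n : ℕ} (N : ℕ) (b c : ℕ → Matrix (Fin n) (Fin n) ℝ) (k : ℕ)
    (hk : k + 1 < N) :
    bwdD N b c k = b k - (c (k + 1))ᵀ * (bwdD N b c (k + 1))⁻¹ * c (k + 1) := by
  unfold bwdD
  have h1 : N - 1 - k = (N - 1 - (k + 1)) + 1 := by omega
  rw [h1]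
  show bwdAux N b c ((N - 1 - (k+1)) + 1) = _
  rw [bwdAux]
  have h2 : N - 1 - (N - 1 - (k + 1) + 1) = k := by omega
  have h3 : N - 1 - (N - 1 - (k + 1)) = k + 1 := by omega
  rw [h2, h3]

theorem blockTri_apply {N n : ℕ} (b c : ℕ → Matrix (Fin n) (Fin n) ℝ)
    (i j : Fin N) (p q : Fin n) :
    blockTri N n b c (i, p) (j, q) =
      (if i = j then b (i : ℕ) p q else 0)
      + (if (j : ℕ) + 1 = (i : ℕ) then c (i : ℕ) p q else 0)
      + (if (i : ℕ) + 1 = (j : ℕ) then c (j : ℕ) q p else 0) := by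
  unfold blockTri
  rcases eq_or_ne i j with h | h
  · subst h; simp [(by omega : ¬ ((i:ℕ)+1 = (i:ℕ)))]
  · have hval : (i : ℕ) ≠ (j : ℕ) := fun hc => h (Fin.ext hc)
    simp only [if_neg h]
    by_cases h2 : (j : ℕ) + 1 = (i : ℕ)
    · simp only [if_pos h2]
      rw [if_neg (by omega : ¬ ((i:ℕ)+1 = (j:ℕ)))]
      ring
    · simp only [if_neg h2]
      split_ifs <;> ring

theorem mulVec_blockTri {N n : ℕ} (b c : ℕ → Matrix (Fin n) (Fin n) ℝ)
    (V : ℕ → Fin n → ℝ) (i : Fin N) (p : Fin n) :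
    (blockTri N n b c *ᵥ (fun pr => V (pr.1 : ℕ) pr.2)) (i, p)
      = (b (i : ℕ) *ᵥ V (i : ℕ)) p
        + (if (i : ℕ) + 1 < N then ((c ((i : ℕ) + 1))ᵀ *ᵥ V ((i : ℕ) + 1)) p else 0)
        + (if 0 < (i : ℕ) then (c (i : ℕ) *ᵥ V ((i : ℕ) - 1)) p else 0) := by
  classical
  rw [mulVec]
  show (∑ jq : Fin N × Fin n, blockTri N n b c (i, p) jq * V (jq.1 : ℕ) jq.2) = _
  rw [Fintype.sum_prod_type]
  have expand : ∀ j : Fin N, ∀ q : Fin n,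
      blockTri N n b c (i, p) (j, q) * V (j : ℕ) q =
        (if i = j then b (i : ℕ) p q * V (j : ℕ) q else 0)
        + (if (j : ℕ) + 1 = (i : ℕ) then c (i : ℕ) p q * V (j : ℕ) q else 0)
        + (if (i : ℕ) + 1 = (j : ℕ) then c (j : ℕ) q p * V (j : ℕ) q else 0) := by
    intro j q
    rw [blockTri_apply, add_mul, add_mul]
    split_ifs <;> ring
  simp only [expand]
  rw [Finset.sum_congr rfl fun j _ => Finset.sum_add_distrib,
      Finset.sum_congr rfl fun j _ => congrArg (· + _) Finset.sum_add_distrib,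
      Finset.sum_add_distrib, Finset.sum_add_distrib]
  have Hdiag : (∑ j : Fin N, ∑ q, if i = j then b (i:ℕ) p q * V (j:ℕ) q else 0)
      = (b (i:ℕ) *ᵥ V (i:ℕ)) p := by
    have : ∀ j : Fin N, (∑ q, if i = j then b (i:ℕ) p q * V (j:ℕ) q else 0)
        = if i = j then (b (i:ℕ) *ᵥ V (i:ℕ)) p else 0 := by
      intro j
      split_ifs with h
      · subst h; rw [mulVec]; rfl
      · simp
    rw [Finset.sum_congr rfl fun j _ => this j]
    simp
  have Hsub : (∑ j : Fin N, ∑ q, if (j:ℕ) + 1 = (i:ℕ) then c (i:ℕ) p q * V (j:ℕ) q else 0)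
      = (if 0 < (i : ℕ) then (c (i : ℕ) *ᵥ V ((i : ℕ) - 1)) p else 0) := by
    by_cases h : 0 < (i : ℕ)
    · rw [if_pos h]
      have hlt : (i : ℕ) - 1 < N := by omega
      rw [Finset.sum_eq_single (⟨(i:ℕ) - 1, hlt⟩ : Fin N)]
      · rw [Finset.sum_congr rfl (fun q _ => if_pos (by simp; omega))]
        rw [mulVec]; rfl
      · intro j _ hj
        refine Finset.sum_eq_zero fun q _ => if_neg fun hc => hj (Fin.ext ?_)
        simp; omega
      · intro hmem; exact absurd (Finset.mem_univ _) hmem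
    · rw [if_neg h]
      refine Finset.sum_eq_zero fun j _ => Finset.sum_eq_zero fun q _ => if_neg (by omega)
  have Hsup : (∑ j : Fin N, ∑ q, if (i:ℕ) + 1 = (j:ℕ) then c (j:ℕ) q p * V (j:ℕ) q else 0)
      = (if (i : ℕ) + 1 < N then ((c ((i : ℕ) + 1))ᵀ *ᵥ V ((i : ℕ) + 1)) p else 0) := by
    by_cases h : (i : ℕ) + 1 < N
    · rw [if_pos h]
      rw [Finset.sum_eq_single (⟨(i:ℕ) + 1, h⟩ : Fin N)]
      · rw [Finset.sum_congr rfl (fun q _ => if_pos (by simp))]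
        rw [mulVec]
        simp [transpose_apply, dotProduct]
      · intro j _ hj
        refine Finset.sum_eq_zero fun q _ => if_neg fun hc => hj (Fin.ext ?_)
        simp; omega
      · intro hmem; exact absurd (Finset.mem_univ _) hmem
    · rw [if_neg h]
      refine Finset.sum_eq_zero fun j _ => Finset.sum_eq_zero fun q _ => if_neg (by
        intro hc; have := j.isLt; omega)
  rw [Hdiag, Hsub, Hsup]
  ring

noncomputable def chainV {n : ℕ} (N : ℕ) (b c : ℕ → Matrix (Fin n) (Fin n) ℝ) (k0 : ℕ)
    (x : Fin n → ℝ) : ℕ → (Fin n → ℝ)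
  | 0 => x
  | m + 1 => -((bwdD N b c (k0 + (m + 1)))⁻¹ *ᵥ (c (k0 + (m + 1)) *ᵥ chainV N b c k0 x m))

noncomputable def Vfun {n : ℕ} (N : ℕ) (b c : ℕ → Matrix (Fin n) (Fin n) ℝ) (k0 : ℕ)
    (x : Fin n → ℝ) (j : ℕ) : Fin n → ℝ :=
  if k0 ≤ j ∧ j < N then chainV N b c k0 x (j - k0) else 0

theorem Vfun_k0 {n : ℕ} {N : ℕ} {b c : ℕ → Matrix (Fin n) (Fin n) ℝ} {k0 : ℕ}
    {x : Fin n → ℝ} (hk : k0 < N) : Vfun N b c k0 x k0 = x := by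
  simp [Vfun, hk, chainV]

theorem Vfun_lt {n : ℕ} {N : ℕ} {b c : ℕ → Matrix (Fin n) (Fin n) ℝ} {k0 : ℕ}
    {x : Fin n → ℝ} {j : ℕ} (h : j < k0) : Vfun N b c k0 x j = 0 := by
  rw [Vfun, if_neg (by omega : ¬ (k0 ≤ j ∧ j < N))]

theorem Vfun_ge {n : ℕ} {N : ℕ} {b c : ℕ → Matrix (Fin n) (Fin n) ℝ} {k0 : ℕ}
    {x : Fin n → ℝ} {j : ℕ} (h : N ≤ j) : Vfun N b c k0 x j = 0 := by
  rw [Vfun, if_neg (by omega : ¬ (k0 ≤ j ∧ j < N))]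

theorem Vfun_succ {n : ℕ} {N : ℕ} {b c : ℕ → Matrix (Fin n) (Fin n) ℝ} {k0 : ℕ}
    {x : Fin n → ℝ} {j : ℕ} (h1 : k0 ≤ j) (h2 : j + 1 < N) :
    Vfun N b c k0 x (j + 1)
      = -((bwdD N b c (j + 1))⁻¹ *ᵥ (c (j + 1) *ᵥ Vfun N b c k0 x j)) := by
  have hc1 : k0 ≤ j + 1 ∧ j + 1 < N := by omega
  have hc2 : k0 ≤ j ∧ j < N := by omega
  have hj1 : j + 1 - k0 = (j - k0) + 1 := by omega
  have hj2 : k0 + (j - k0 + 1) = j + 1 := by omega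
  rw [Vfun, if_pos hc1, hj1, chainV, hj2, Vfun, if_pos hc2]


theorem quadBounds {ι : Type*} [Fintype ι] [DecidableEq ι] (M : Matrix ι ι ℝ)
    (hM : M.IsHermitian) {aL aU : ℝ}
    (hbd : ∀ i, aL ≤ hM.eigenvalues i ∧ hM.eigenvalues i ≤ aU) (x : ι → ℝ) :
    aL * (x ⬝ᵥ x) ≤ x ⬝ᵥ (M *ᵥ x) ∧ x ⬝ᵥ (M *ᵥ x) ≤ aU * (x ⬝ᵥ x) := by
  classical
  set U : Matrix ι ι ℝ := (hM.eigenvectorUnitary : Matrix ι ι ℝ) with hU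
  set y : ι → ℝ := Uᵀ *ᵥ x with hy
  have hstar : star U = Uᵀ := rfl
  have hUU : U * Uᵀ = 1 := by
    have := (Matrix.mem_unitaryGroup_iff).mp hM.eigenvectorUnitary.2
    exact this
  have hDre : Matrix.diagonal (RCLike.ofReal ∘ hM.eigenvalues) = Matrix.diagonal hM.eigenvalues := by
    congr 1
  have hquad : x ⬝ᵥ (M *ᵥ x) = ∑ i, hM.eigenvalues i * (y i)^2 := by
    conv_lhs => rw [hM.spectral_theorem, hDre]
    rw [Unitary.conjStarAlgAut_apply, ← hU, ← mulVec_mulVec, ← mulVec_mulVec, hstar, dotProduct_mulVec, ← mulVec_transpose, ← hy]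
    simp [mulVec_diagonal, dotProduct, sq]; exact Finset.sum_congr rfl fun j _ => by ring
  have hnorm : x ⬝ᵥ x = ∑ i, (y i)^2 := by
    have h1 : x ⬝ᵥ x = x ⬝ᵥ ((U * Uᵀ) *ᵥ x) := by rw [hUU]; simp
    rw [h1, ← mulVec_mulVec, dotProduct_mulVec, ← mulVec_transpose, ← hy]
    simp [dotProduct, sq]
  constructor
  · rw [hquad, hnorm, Finset.mul_sum]
    exact Finset.sum_le_sum fun i _ => mul_le_mul_of_nonneg_right (hbd i).1 (sq_nonneg _)
  · rw [hquad, hnorm, Finset.mul_sum]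
    exact Finset.sum_le_sum fun i _ => mul_le_mul_of_nonneg_right (hbd i).2 (sq_nonneg _)

theorem eigBounds {ι : Type*} [Fintype ι] [DecidableEq ι] (M : Matrix ι ι ℝ)
    (hM : M.IsHermitian) {aL aU : ℝ}
    (h : ∀ x : ι → ℝ, aL * (x ⬝ᵥ x) ≤ x ⬝ᵥ (M *ᵥ x) ∧ x ⬝ᵥ (M *ᵥ x) ≤ aU * (x ⬝ᵥ x)) :
    ∀ i, aL ≤ hM.eigenvalues i ∧ hM.eigenvalues i ≤ aU := by
  intro i
  have hev := hM.eigenvalues_eq i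
  set u : ι → ℝ := ⇑(hM.eigenvectorBasis i) with hu
  have hstar : star u = u := by simp
  have hunit : u ⬝ᵥ u = 1 := by
    have := hM.eigenvectorBasis.orthonormal.1 i
    have h2 : (inner ℝ (hM.eigenvectorBasis i) (hM.eigenvectorBasis i) : ℝ) = 1 := by
      rw [real_inner_self_eq_norm_mul_norm, this]; norm_num
    rw [EuclideanSpace.inner_eq_star_dotProduct] at h2
    simpa [hstar] using h2
  have : hM.eigenvalues i = u ⬝ᵥ (M *ᵥ u) := by
    rw [hev]; simp [hstar]
  rw [this]
  have := h u
  rw [hunit] at this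
  simpa using this

-- rows above k0 of A *ᵥ emb(Vfun) vanish
theorem row_vanish {N n : ℕ} (b c : ℕ → Matrix (Fin n) (Fin n) ℝ) (k0 : ℕ)
    (x : Fin n → ℝ)
    (hinv : ∀ j, k0 < j → j < N → IsUnit (bwdD N b c j).det)
    (i : Fin N) (hgt : k0 < (i : ℕ)) (p : Fin n) :
    (blockTri N n b c *ᵥ (fun pr => Vfun N b c k0 x (pr.1 : ℕ) pr.2)) (i, p) = 0 := by
  rw [mulVec_blockTri]
  set j := (i : ℕ) with hj
  have hjN : j < N := i.isLt
  have h0j : 0 < j := by omega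
  rw [if_pos h0j]
  have hjj : j = (j - 1) + 1 := by omega
  have hVj : Vfun N b c k0 x j
      = -((bwdD N b c j)⁻¹ *ᵥ (c j *ᵥ Vfun N b c k0 x (j - 1))) := by
    conv_lhs => rw [hjj]
    rw [Vfun_succ (by omega) (by omega)]
    rw [← hjj]
  have hdj : IsUnit (bwdD N b c j).det := hinv j hgt hjN
  by_cases hsup : j + 1 < N
  · rw [if_pos hsup]
    have hVj1 : Vfun N b c k0 x (j + 1)
        = -((bwdD N b c (j + 1))⁻¹ *ᵥ (c (j + 1) *ᵥ Vfun N b c k0 x j)) :=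
      Vfun_succ (by omega) hsup
    have hstep : (c (j + 1))ᵀ * (bwdD N b c (j + 1))⁻¹ * c (j + 1)
        = b j - bwdD N b c j := by
      rw [bwdD_step N b c j hsup, sub_sub_cancel]
    have key : (b j *ᵥ Vfun N b c k0 x j)
        + ((c (j + 1))ᵀ *ᵥ Vfun N b c k0 x (j + 1))
        + (c j *ᵥ Vfun N b c k0 x (j - 1)) = 0 := by
      rw [hVj1, mulVec_neg, mulVec_mulVec, mulVec_mulVec, hstep,
        Matrix.sub_mulVec]
      have : bwdD N b c j *ᵥ Vfun N b c k0 x j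
          = -(c j *ᵥ Vfun N b c k0 x (j - 1)) := by
        rw [hVj, mulVec_neg, mulVec_mulVec, Matrix.mul_nonsing_inv _ hdj, one_mulVec]
      rw [this]
      abel
    calc (b j *ᵥ Vfun N b c k0 x j) p
          + ((c (j + 1))ᵀ *ᵥ Vfun N b c k0 x (j + 1)) p
          + (c j *ᵥ Vfun N b c k0 x (j - 1)) p
        = ((b j *ᵥ Vfun N b c k0 x j)
          + ((c (j + 1))ᵀ *ᵥ Vfun N b c k0 x (j + 1))
          + (c j *ᵥ Vfun N b c k0 x (j - 1))) p := rfl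
      _ = 0 := by rw [key]; rfl
  · rw [if_neg hsup]
    have hlast : bwdD N b c j = b j := by
      have : j = N - 1 := by omega
      rw [this, bwdD_last]
    have key : (b j *ᵥ Vfun N b c k0 x j)
        + (c j *ᵥ Vfun N b c k0 x (j - 1)) = 0 := by
      rw [← hlast, hVj, mulVec_neg, mulVec_mulVec, Matrix.mul_nonsing_inv _ hdj, one_mulVec]
      abel
    calc (b j *ᵥ Vfun N b c k0 x j) p + 0
          + (c j *ᵥ Vfun N b c k0 x (j - 1)) p
        = ((b j *ᵥ Vfun N b c k0 x j)
          + (c j *ᵥ Vfun N b c k0 x (j - 1))) p := by simp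
      _ = 0 := by rw [key]; rfl

-- row k0
theorem row_k0 {N n : ℕ} (b c : ℕ → Matrix (Fin n) (Fin n) ℝ) (k0 : ℕ)
    (x : Fin n → ℝ) (hk : k0 < N)
    (i : Fin N) (hik : (i : ℕ) = k0) (p : Fin n) :
    (blockTri N n b c *ᵥ (fun pr => Vfun N b c k0 x (pr.1 : ℕ) pr.2)) (i, p)
      = (bwdD N b c k0 *ᵥ x) p := by
  rw [mulVec_blockTri, hik, Vfun_k0 hk]
  have hsub : (if 0 < k0 then (c k0 *ᵥ Vfun N b c k0 x (k0 - 1)) p else 0) = 0 := by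
    split_ifs with h
    · rw [Vfun_lt (by omega), mulVec_zero]; rfl
    · rfl
  rw [hsub, add_zero]
  by_cases hsup : k0 + 1 < N
  · rw [if_pos hsup]
    have hV1 : Vfun N b c k0 x (k0 + 1)
        = -((bwdD N b c (k0 + 1))⁻¹ *ᵥ (c (k0 + 1) *ᵥ x)) := by
      rw [Vfun_succ (le_refl _) hsup, Vfun_k0 hk]
    have key : (b k0 *ᵥ x) + ((c (k0 + 1))ᵀ *ᵥ Vfun N b c k0 x (k0 + 1))
        = bwdD N b c k0 *ᵥ x := by
      rw [hV1, mulVec_neg, mulVec_mulVec, mulVec_mulVec,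
        bwdD_step N b c k0 hsup, Matrix.sub_mulVec]
      abel
    calc (b k0 *ᵥ x) p + ((c (k0 + 1))ᵀ *ᵥ Vfun N b c k0 x (k0 + 1)) p
        = ((b k0 *ᵥ x) + ((c (k0 + 1))ᵀ *ᵥ Vfun N b c k0 x (k0 + 1))) p := rfl
      _ = (bwdD N b c k0 *ᵥ x) p := by rw [key]
  · rw [if_neg hsup, add_zero]
    have : k0 = N - 1 := by omega
    rw [this, bwdD_last]

theorem dot_emb {N n : ℕ} (V : ℕ → Fin n → ℝ) (w : Fin N × Fin n → ℝ) :
    (fun pr : Fin N × Fin n => V (pr.1 : ℕ) pr.2) ⬝ᵥ w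
      = ∑ i : Fin N, ∑ p : Fin n, V (i : ℕ) p * w (i, p) := by
  rw [dotProduct, Fintype.sum_prod_type]

theorem dot_emb_self {N n : ℕ} (V : ℕ → Fin n → ℝ) :
    (fun pr : Fin N × Fin n => V (pr.1 : ℕ) pr.2) ⬝ᵥ
        (fun pr : Fin N × Fin n => V (pr.1 : ℕ) pr.2)
      = ∑ i : Fin N, (V (i : ℕ) ⬝ᵥ V (i : ℕ)) := by
  rw [dotProduct, Fintype.sum_prod_type]
  rfl

theorem dK_quad_lower {N n : ℕ} (b c : ℕ → Matrix (Fin n) (Fin n) ℝ) {aL : ℝ}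
    (hAq : ∀ v : Fin N × Fin n → ℝ,
      aL * (v ⬝ᵥ v) ≤ v ⬝ᵥ (blockTri N n b c *ᵥ v))
    (haL : 0 < aL) (k : ℕ) (hk : k < N)
    (hinv : ∀ j, k < j → j < N → IsUnit (bwdD N b c j).det)
    (x : Fin n → ℝ) :
    aL * (x ⬝ᵥ x) ≤ x ⬝ᵥ (bwdD N b c k *ᵥ x) := by
  classical
  set e : Fin N × Fin n → ℝ := fun pr => Vfun N b c k x (pr.1 : ℕ) pr.2 with he
  have hdot : e ⬝ᵥ (blockTri N n b c *ᵥ e) = x ⬝ᵥ (bwdD N b c k *ᵥ x) := by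
    rw [he, dot_emb, Finset.sum_eq_single (⟨k, hk⟩ : Fin N)]
    · rw [dotProduct]
      refine Finset.sum_congr rfl fun p _ => ?_
      rw [row_k0 b c k x hk ⟨k, hk⟩ rfl p]
      show Vfun N b c k x k p * _ = _
      rw [Vfun_k0 hk]
    · intro i _ hi
      rcases lt_or_gt_of_ne (fun hc : (i : ℕ) = k => hi (Fin.ext hc)) with hlt | hgt
      · refine Finset.sum_eq_zero fun p _ => ?_
        rw [Vfun_lt hlt]
        exact zero_mul _
      · refine Finset.sum_eq_zero fun p _ => ?_
        rw [row_vanish b c k x hinv i hgt p, mul_zero]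
    · intro hmem; exact absurd (Finset.mem_univ _) hmem
  have hee : x ⬝ᵥ x ≤ e ⬝ᵥ e := by
    rw [he, dot_emb_self]
    have hx : x ⬝ᵥ x = Vfun N b c k x ((⟨k, hk⟩ : Fin N) : ℕ) ⬝ᵥ
        Vfun N b c k x ((⟨k, hk⟩ : Fin N) : ℕ) := by
      show x ⬝ᵥ x = Vfun N b c k x k ⬝ᵥ Vfun N b c k x k
      rw [Vfun_k0 hk]
    rw [hx]
    refine Finset.single_le_sum
      (f := fun i : Fin N => Vfun N b c k x (i : ℕ) ⬝ᵥ Vfun N b c k x (i : ℕ))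
      (fun i _ => ?_) (Finset.mem_univ (⟨k, hk⟩ : Fin N))
    exact Finset.sum_nonneg fun p _ => mul_self_nonneg _
  calc aL * (x ⬝ᵥ x) ≤ aL * (e ⬝ᵥ e) :=
        mul_le_mul_of_nonneg_left hee (le_of_lt haL)
    _ ≤ e ⬝ᵥ (blockTri N n b c *ᵥ e) := hAq e
    _ = x ⬝ᵥ (bwdD N b c k *ᵥ x) := hdot

theorem quad_block {N n : ℕ} (b c : ℕ → Matrix (Fin n) (Fin n) ℝ) (i : Fin N)
    (x : Fin n → ℝ) :
    (fun pr : Fin N × Fin n => if (pr.1 : ℕ) = (i : ℕ) then x pr.2 else 0) ⬝ᵥ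
        (blockTri N n b c *ᵥ
          (fun pr : Fin N × Fin n => if (pr.1 : ℕ) = (i : ℕ) then x pr.2 else 0))
      = x ⬝ᵥ (b (i : ℕ) *ᵥ x) := by
  classical
  set W : ℕ → Fin n → ℝ := fun j => if j = (i : ℕ) then x else 0 with hW
  have hfun : (fun pr : Fin N × Fin n => if (pr.1 : ℕ) = (i : ℕ) then x pr.2 else 0)
      = fun pr : Fin N × Fin n => W (pr.1 : ℕ) pr.2 := by
    funext pr
    rw [hW]
    by_cases h : (pr.1 : ℕ) = (i : ℕ) <;> simp [h]
  rw [hfun, dot_emb]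
  rw [Finset.sum_eq_single i]
  · have hrow : ∀ p, (blockTri N n b c *ᵥ fun pr : Fin N × Fin n =>
        W (pr.1 : ℕ) pr.2) (i, p)
        = (b (i : ℕ) *ᵥ x) p := by
      intro p
      rw [mulVec_blockTri]
      have h2 : (if (i : ℕ) + 1 < N then
          ((c ((i:ℕ)+1))ᵀ *ᵥ W ((i:ℕ)+1)) p
          else 0) = 0 := by
        split_ifs with h
        · show ((c ((i:ℕ)+1))ᵀ *ᵥ (if (i:ℕ)+1 = (i:ℕ) then x else 0)) p = 0
          rw [if_neg (by omega), mulVec_zero]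
          rfl
        · rfl
      have h3 : (if 0 < (i : ℕ) then
          (c (i:ℕ) *ᵥ W ((i:ℕ)-1)) p
          else 0) = 0 := by
        split_ifs with h
        · show (c (i:ℕ) *ᵥ (if (i:ℕ)-1 = (i:ℕ) then x else 0)) p = 0
          rw [if_neg (by omega), mulVec_zero]
          rfl
        · rfl
      rw [h2, h3, add_zero, add_zero]
      show (b (i:ℕ) *ᵥ (if (i:ℕ) = (i:ℕ) then x else 0)) p = _
      rw [if_pos rfl]
    rw [dotProduct]
    refine Finset.sum_congr rfl fun p _ => ?_
    rw [hrow p]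
    show (if (i:ℕ) = (i:ℕ) then x else 0) p * _ = _
    rw [if_pos rfl]
  · intro j _ hj
    refine Finset.sum_eq_zero fun p _ => ?_
    show (if (j:ℕ) = (i:ℕ) then x else 0) p * _ = 0
    rw [if_neg (fun hc => hj (Fin.ext hc))]
    show (0:ℝ) * _ = 0
    exact zero_mul _
  · intro hmem; exact absurd (Finset.mem_univ _) hmem
theorem norm_block {N n : ℕ} (i : Fin N) (x : Fin n → ℝ) :
    (fun pr : Fin N × Fin n => if (pr.1 : ℕ) = (i : ℕ) then x pr.2 else 0) ⬝ᵥ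
        (fun pr : Fin N × Fin n => if (pr.1 : ℕ) = (i : ℕ) then x pr.2 else 0)
      = x ⬝ᵥ x := by
  classical
  rw [dotProduct, Fintype.sum_prod_type]
  rw [Finset.sum_eq_single i]
  · simp [dotProduct]
  · intro j _ hj
    refine Finset.sum_eq_zero fun p _ => ?_
    rw [if_neg (fun hc : (j:ℕ) = (i:ℕ) => hj (Fin.ext hc))]
    exact zero_mul _
  · intro hmem; exact absurd (Finset.mem_univ _) hmem

/-- If the symmetric positive definite block tridiagonal matrix `A` has all
eigenvalues in `[αL, αU]` with `0 < αL`, then every backward Schur complement `d_k`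
(`d_{N-1} = b_{N-1}`, `d_k = b_k − c_{k+1}ᵀ d_{k+1}⁻¹ c_{k+1}`, 0-based) is symmetric
positive definite with all eigenvalues in `[αL, αU]`. -/
theorem stmt5 (N n : ℕ) [NeZero N] [NeZero n]
    (b c : ℕ → Matrix (Fin n) (Fin n) ℝ)
    (A : Matrix (Fin N × Fin n) (Fin N × Fin n) ℝ) (hAdef : A = blockTri N n b c)
    (hA : A.PosDef)
    (αL αU : ℝ) (hαL : 0 < αL)
    (hbd : ∀ i, αL ≤ hA.1.eigenvalues i ∧ hA.1.eigenvalues i ≤ αU) :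
    ∀ k < N, ∃ h : (bwdD N b c k).PosDef,
      ∀ i, αL ≤ h.1.eigenvalues i ∧ h.1.eigenvalues i ≤ αU := by
  subst hAdef
  have hAq := fun v : Fin N × Fin n → ℝ => quadBounds _ hA.1 hbd v
  have hb : ∀ i : Fin N, (b (i : ℕ)).IsHermitian := by
    intro i
    ext p q
    have h1 := hA.1.apply (i, q) (i, p)
    have e1 : blockTri N n b c (i, q) (i, p) = b (i : ℕ) q p := by
      show (if (i, q).1 = (i, p).1 then _ else _) = _
      rw [if_pos rfl]
    have e2 : blockTri N n b c (i, p) (i, q) = b (i : ℕ) p q := by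
      show (if (i, p).1 = (i, q).1 then _ else _) = _
      rw [if_pos rfl]
    rw [e1, e2, star_trivial] at h1
    rw [conjTranspose_apply, star_trivial]
    exact h1.symm
  have key : ∀ j : ℕ, ∀ k : ℕ, k < N → N - 1 - k = j →
      (bwdD N b c k).IsHermitian ∧ ∀ x : Fin n → ℝ,
        αL * (x ⬝ᵥ x) ≤ x ⬝ᵥ (bwdD N b c k *ᵥ x) ∧
        x ⬝ᵥ (bwdD N b c k *ᵥ x) ≤ αU * (x ⬝ᵥ x) := by
    intro j
    induction j using Nat.strong_induction_on with
    | _ j IH =>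
    intro k hkN hj
    have later : ∀ k', k < k' → k' < N →
        (bwdD N b c k').IsHermitian ∧ ∀ x : Fin n → ℝ,
          αL * (x ⬝ᵥ x) ≤ x ⬝ᵥ (bwdD N b c k' *ᵥ x) ∧
          x ⬝ᵥ (bwdD N b c k' *ᵥ x) ≤ αU * (x ⬝ᵥ x) := by
      intro k' h1 h2
      exact IH (N - 1 - k') (by omega) k' h2 rfl
    have laterPD : ∀ k', k < k' → k' < N → (bwdD N b c k').PosDef := by
      intro k' h1 h2
      obtain ⟨hh, hq⟩ := later k' h1 h2
      refine PosDef.of_dotProduct_mulVec_pos hh fun x hx => ?_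
      have hxx : (0:ℝ) < x ⬝ᵥ x := by
        have := dotProduct_star_self_pos_iff (v := x) |>.2 hx
        simpa using this
      have h5 : (0:ℝ) < x ⬝ᵥ (bwdD N b c k' *ᵥ x) :=
        lt_of_lt_of_le (mul_pos hαL hxx) (hq x).1
      simpa using h5
    have hinv : ∀ j', k < j' → j' < N → IsUnit (bwdD N b c j').det := by
      intro j' h1 h2
      exact isUnit_iff_ne_zero.2 (laterPD j' h1 h2).det_pos.ne'
    have hbk : (b k).IsHermitian := by
      have := hb ⟨k, hkN⟩
      simpa using this
    have hherm : (bwdD N b c k).IsHermitian := by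
      rcases Nat.lt_or_ge k (N - 1) with hlt | hge
      · rw [bwdD_step N b c k (by omega)]
        refine IsHermitian.sub hbk ?_
        have hmm : ((bwdD N b c (k + 1))⁻¹).IsHermitian :=
          ((later (k + 1) (by omega) (by omega)).1).inv
        have h4 : (c (k + 1))ᴴ = (c (k + 1))ᵀ := by
          ext p q; simp [conjTranspose_apply]
        rw [← h4]
        exact isHermitian_conjTranspose_mul_mul _ hmm
      · have hk' : k = N - 1 := by omega
        rw [hk', bwdD_last]
        have := hb ⟨N - 1, by omega⟩
        simpa using this
    refine ⟨hherm, fun x => ?_⟩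
    have hup_b : x ⬝ᵥ (b k *ᵥ x) ≤ αU * (x ⬝ᵥ x) := by
      have h1 := quad_block b c (⟨k, hkN⟩ : Fin N) x
      have h2 := norm_block (⟨k, hkN⟩ : Fin N) x
      have h3 := (hAq (fun pr : Fin N × Fin n =>
        if (pr.1 : ℕ) = ((⟨k, hkN⟩ : Fin N) : ℕ) then x pr.2 else 0)).2
      rw [h1, h2] at h3
      simpa using h3
    constructor
    · exact dK_quad_lower b c (fun v => (hAq v).1) hαL k hkN hinv x
    · rcases Nat.lt_or_ge k (N - 1) with hlt | hge
      · rw [bwdD_step N b c k (by omega), Matrix.sub_mulVec, dotProduct_sub]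
        have hpsd : (0:ℝ) ≤ x ⬝ᵥ (((c (k+1))ᵀ * (bwdD N b c (k+1))⁻¹ * c (k+1)) *ᵥ x) := by
          have hpd := (laterPD (k + 1) (by omega) (by omega)).inv
          have h6 := (hpd.posSemidef.conjTranspose_mul_mul_same (c (k + 1))).dotProduct_mulVec_nonneg x
          have h4 : (c (k + 1))ᴴ = (c (k + 1))ᵀ := by
            ext p q; simp [conjTranspose_apply]
          rw [h4] at h6
          simpa using h6
        linarith
      · have hk' : k = N - 1 := by omega
        rw [hk', bwdD_last]
        rw [hk'] at hup_b
        exact hup_b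
  intro k hkN
  obtain ⟨hherm, hq⟩ := key (N - 1 - k) k hkN rfl
  have hpd : (bwdD N b c k).PosDef := by
    refine PosDef.of_dotProduct_mulVec_pos hherm fun x hx => ?_
    have hxx : (0:ℝ) < x ⬝ᵥ x := by
      have := dotProduct_star_self_pos_iff (v := x) |>.2 hx
      simpa using this
    have h5 : (0:ℝ) < x ⬝ᵥ (bwdD N b c k *ᵥ x) :=
      lt_of_lt_of_le (mul_pos hαL hxx) (hq x).1
    simpa using h5
  exact ⟨hpd, eigBounds _ hpd.1 hq⟩
end

section
/- Suppose b_k = q_k⁻¹ + u_k + g_{k+1}ᵀ q_{k+1}⁻¹ g_{k+1} and c_k = −q_k⁻¹ g_k, where each q_k is symmetric positive definite, each u_k is symmetric positive semidefinite, and g_{N+1} = 0. Define the backward recursion d_N = b_N, d_k = b_k − c_{k+1}ᵀ d_{k+1}⁻¹ c_{k+1}. Then d_k − q_k⁻¹ is positive semidefinite for every k. -/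
open Matrix

lemma ct_eq {n : ℕ} (A : Matrix (Fin n) (Fin n) ℝ) : Aᴴ = Aᵀ := by
  ext i j; simp [Matrix.conjTranspose_apply]

lemma key {n : ℕ} {A d : Matrix (Fin n) (Fin n) ℝ} (hA : A.PosDef)
    (hd : (d - A).PosSemidef) : (A - A * d⁻¹ * A).PosSemidef := by
  have hdpd : d.PosDef := by
    have := hA.add_posSemidef hd
    simpa using this
  have hAdet : IsUnit A.det := Matrix.isUnit_iff_isUnit_det A |>.mp hA.isUnit
  have hddet : IsUnit d.det := Matrix.isUnit_iff_isUnit_det d |>.mp hdpd.isUnit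
  have eA1 : A * A⁻¹ = 1 := Matrix.mul_nonsing_inv A hAdet
  have eA2 : A⁻¹ * A = 1 := Matrix.nonsing_inv_mul A hAdet
  have ed1 : d * d⁻¹ = 1 := Matrix.mul_nonsing_inv d hddet
  have ed2 : d⁻¹ * d = 1 := Matrix.nonsing_inv_mul d hddet
  have hAh : Aᴴ = A := hA.isHermitian
  have hdh : dᴴ = d := hdpd.isHermitian
  have hAih : A⁻¹ᴴ = A⁻¹ := hA.inv.isHermitian
  have hdih : d⁻¹ᴴ = d⁻¹ := hdpd.inv.isHermitian
  have hAt : Aᵀ = A := by rw [← ct_eq]; exact hAh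
  have hdt : dᵀ = d := by rw [← ct_eq]; exact hdh
  have hdit : d⁻¹ᵀ = d⁻¹ := by rw [← ct_eq]; exact hdih
  set X := (d - A) * d⁻¹ * A with hX
  set Y := d⁻¹ * A with hY
  have hXh : Xᴴ = A * d⁻¹ * (d - A) := by
    simp [hX, Matrix.conjTranspose_mul, Matrix.conjTranspose_sub, hAh, hdh, hdih, hAt, hdt, hdit,
      Matrix.mul_assoc]
  have hYh : Yᴴ = A * d⁻¹ := by
    simp [hY, Matrix.conjTranspose_mul, hAh, hdih, hAt, hdit]
  have hkey : A - A * d⁻¹ * A = Xᴴ * A⁻¹ * X + Yᴴ * (d - A) * Y := by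
    rw [hXh, hYh, hX, hY]
    simp only [Matrix.mul_sub, Matrix.sub_mul, Matrix.mul_assoc, eA2, ed2, Matrix.mul_one,
      Matrix.one_mul]
    simp only [← Matrix.mul_assoc, eA1, ed1, Matrix.mul_one, Matrix.one_mul]
    simp only [Matrix.mul_assoc, eA2, ed2, Matrix.mul_one, Matrix.one_mul]
    simp only [← Matrix.mul_assoc, eA1, ed1, Matrix.mul_one, Matrix.one_mul]
    abel
  rw [hkey]
  exact (hA.inv.posSemidef.conjTranspose_mul_mul_same X).add
    (hd.conjTranspose_mul_mul_same Y)

/-- For the Kalman block tridiagonal system with (1-based) blocks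
`b_k = q_k⁻¹ + u_k + g_{k+1}ᵀ q_{k+1}⁻¹ g_{k+1}` and `c_k = −q_k⁻¹ g_k` (`q_k` symmetric
positive definite, `u_k` symmetric positive semidefinite, `g_{N+1} = 0`), the backward
Schur complements `d_N = b_N`, `d_k = b_k − c_{k+1}ᵀ d_{k+1}⁻¹ c_{k+1}` satisfy:
`d_k − q_k⁻¹` is positive semidefinite for every `k = 1,…,N`.
(Here `bwdD N (fun i => B (i+1)) (fun i => C (i+1)) (k-1)` is the 0-based form of `d_k`.) -/
theorem stmt7 (N n : ℕ) (hN : 0 < N)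
    (q u g : ℕ → Matrix (Fin n) (Fin n) ℝ)
    (hq : ∀ k, (q k).PosDef) (hu : ∀ k, (u k).PosSemidef)
    (hgN1 : g (N + 1) = 0)
    (B C : ℕ → Matrix (Fin n) (Fin n) ℝ)
    (hB : ∀ k, B k = (q k)⁻¹ + u k + (g (k + 1))ᵀ * (q (k + 1))⁻¹ * g (k + 1))
    (hC : ∀ k, C k = -((q k)⁻¹ * g k)) :
    ∀ k, 1 ≤ k → k ≤ N →
      (bwdD N (fun i => B (i + 1)) (fun i => C (i + 1)) (k - 1) - (q k)⁻¹).PosSemidef := by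
  set B' : ℕ → Matrix (Fin n) (Fin n) ℝ := fun i => B (i + 1) with hB'
  set C' : ℕ → Matrix (Fin n) (Fin n) ℝ := fun i => C (i + 1) with hC'
  have main : ∀ j, j < N → (bwdAux N B' C' j - (q (N - j))⁻¹).PosSemidef := by
    intro j
    induction j with
    | zero =>
      intro _
      have h1 : (N - 1) + 1 = N := by omega
      have : bwdAux N B' C' 0 = B N := by
        show B' (N - 1) = B N
        rw [hB']; simp [h1]
      rw [this, hB N, hgN1, Nat.sub_zero]
      simpa using hu N
    | succ j ih =>
      intro hjN
      have ihj := ih (by omega)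
      set m := N - (j + 1) with hm
      have hm1 : N - j = m + 1 := by omega
      have e1 : N - 1 - (j + 1) + 1 = m := by omega
      have e2 : N - 1 - j + 1 = m + 1 := by omega
      have hexp : bwdAux N B' C' (j + 1) =
          B m - (C (m + 1))ᵀ * (bwdAux N B' C' j)⁻¹ * C (m + 1) := by
        show B' (N - 1 - (j + 1)) - (C' (N - 1 - j))ᵀ * (bwdAux N B' C' j)⁻¹ *
          C' (N - 1 - j) = _
        rw [hB', hC']; simp only [e1, e2]
      rw [hexp]
      set D := bwdAux N B' C' j with hD
      rw [hm1] at ihj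
      set A := (q (m + 1))⁻¹ with hA
      have hApd : A.PosDef := (hq (m + 1)).inv
      have hAt : Aᵀ = A := by rw [← ct_eq]; exact hApd.isHermitian
      set G := g (m + 1) with hG
      have hCt : (C (m + 1))ᵀ = -(Gᵀ * A) := by
        rw [hC]; simp [Matrix.transpose_mul, hAt]; exact congrArg (fun X => Gᵀ * X) hAt
      have hgoal_eq : B m - (C (m + 1))ᵀ * D⁻¹ * C (m + 1) - (q m)⁻¹ =
          u m + Gᴴ * (A - A * D⁻¹ * A) * G := by
        rw [hB m, hCt, hC (m + 1), ct_eq]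
        simp only [Matrix.mul_sub, Matrix.sub_mul, Matrix.neg_mul, Matrix.mul_neg,
          neg_neg, Matrix.mul_assoc]
        abel
      rw [hgoal_eq]
      exact (hu m).add ((key hApd ihj).conjTranspose_mul_mul_same G)
  intro k hk1 hkN
  have hbd : bwdD N B' C' (k - 1) = bwdAux N B' C' (N - k) := by
    unfold bwdD
    rw [show N - 1 - (k - 1) = N - k by omega]
  have := main (N - k) (by omega)
  rw [show N - (N - k) = k by omega] at this
  rw [hbd]
  exact this
end
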